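/- Over the field K = ℚ(q1,q2) of rational functions, the matrix E = M(2,2) has rank exactly 6; equivalently, its kernel is 3-dimensional and is spanned by α = (2(q1+q2),0,0,−1,1,−1,0,0,0), β = (0,−2q2,2q1,0,0,0,−1,1,0), and γ = (−4q1q2,0,0,−2q2,0,−2q1,0,0,1). -/

import Mathlib

open MvPolynomial Matrix

/-- The matrix of small quantum multiplication by `a1*h1 + a2*h2` on the
ambient cohomology of a Verra fourfold, in the basis
`(1, h1, h2, h1^2, h1*h2, h2^2, h1^2*h2, h1*h2^2, h1^2*h2^2)`. -/
def verraM {R : Type*} [CommRing R] (q1 q2 a1 a2 : R) : Matrix (Fin 9) (Fin 9) R :=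
  let b1 := a1 * q1
  let b2 := a2 * q2
  let c := 8 * (a1 + a2) * q1 * q2
  !![0, 2*b1, 2*b2, 0, 0, 0, c, c, 0;
     a1, 0, 0, 2*b1, 2*b2, 4*b2, 0, 0, c;
     a2, 0, 0, 4*b1, 2*b1, 2*b2, 0, 0, c;
     0, a1, 0, 0, 0, 0, 2*b2, 4*b2, 0;
     0, a2, a1, 0, 0, 0, 2*b1, 2*b2, 0;
     0, 0, a2, 0, 0, 0, 4*b1, 2*b1, 0;
     0, 0, 0, a2, a1, 0, 0, 0, 2*b2;
     0, 0, 0, 0, a2, a1, 0, 0, 2*b1;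
     0, 0, 0, 0, 0, 0, a2, a1, 0]

/-- `K = ℚ(q1, q2)`, the field of rational functions in two variables. -/
abbrev Kq : Type := FractionRing (MvPolynomial (Fin 2) ℚ)

noncomputable def q1 : Kq := algebraMap (MvPolynomial (Fin 2) ℚ) Kq (X 0)
noncomputable def q2 : Kq := algebraMap (MvPolynomial (Fin 2) ℚ) Kq (X 1)
noncomputable def alpha : Fin 9 → Kq := ![2*(q1+q2), 0, 0, -1, 1, -1, 0, 0, 0]
noncomputable def beta : Fin 9 → Kq := ![0, -2*q2, 2*q1, 0, 0, 0, -1, 1, 0]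
noncomputable def gamma : Fin 9 → Kq := ![-4*q1*q2, 0, 0, -2*q2, 0, -2*q1, 0, 0, 1]

set_option maxHeartbeats 1000000 in
lemma mulA : (verraM q1 q2 2 2).mulVecLin alpha = 0 := by
  simp only [mulVecLin_apply, verraM, alpha, cons_mulVec, empty_mulVec, cons_dotProduct,
    dotProduct_of_isEmpty, head_cons, tail_cons, cons_eq_zero_iff]
  and_intros <;> first | exact (Matrix.empty_eq 0).symm | ring

set_option maxHeartbeats 1000000 in
lemma mulB : (verraM q1 q2 2 2).mulVecLin beta = 0 := by
  simp only [mulVecLin_apply, verraM, beta, cons_mulVec, empty_mulVec, cons_dotProduct,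
    dotProduct_of_isEmpty, head_cons, tail_cons, cons_eq_zero_iff]
  and_intros <;> first | exact (Matrix.empty_eq 0).symm | ring

set_option maxHeartbeats 1000000 in
lemma mulG : (verraM q1 q2 2 2).mulVecLin gamma = 0 := by
  simp only [mulVecLin_apply, verraM, gamma, cons_mulVec, empty_mulVec, cons_dotProduct,
    dotProduct_of_isEmpty, head_cons, tail_cons, cons_eq_zero_iff]
  and_intros <;> first | exact (Matrix.empty_eq 0).symm | ring

set_option maxHeartbeats 1000000 in
lemma ker_le : LinearMap.ker (verraM q1 q2 2 2).mulVecLin ≤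
    Submodule.span Kq {alpha, beta, gamma} := by
  intro v hv
  rw [LinearMap.mem_ker] at hv
  have hrep : v = ![v 0, v 1, v 2, v 3, v 4, v 5, v 6, v 7, v 8] := by
    funext i; fin_cases i <;> rfl
  rw [hrep] at hv
  simp only [mulVecLin_apply, verraM, cons_mulVec, empty_mulVec, cons_dotProduct,
    dotProduct_of_isEmpty, head_cons, tail_cons, cons_eq_zero_iff] at hv
  obtain ⟨h0, h1, h2, h3, h4, h5, h6, h7, h8, -⟩ := hv
  have key : v = (v 4) • alpha + (-(v 6)) • beta + (v 8) • gamma := by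
    rw [← sub_eq_zero]
    nth_rewrite 1 [hrep]
    simp only [alpha, beta, gamma, smul_cons, smul_empty, cons_add_cons, empty_add_empty,
      cons_sub_cons, empty_sub_empty, cons_eq_zero_iff, smul_eq_mul]
    refine ⟨by linear_combination h1/2 - q1*h6 - 2*q2*h7,
            by linear_combination h3/2 - 2*q2*h8,
            by linear_combination h5/2 - q1*h8,
            by linear_combination h6/2,
            by ring,
            by linear_combination h7/2,
            by ring,
            by linear_combination h8/2,
            by ring, (Matrix.empty_eq 0).symm⟩
  rw [key]
  have hmem : ∀ x ∈ ({alpha, beta, gamma} : Set (Fin 9 → Kq)),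
      x ∈ Submodule.span Kq {alpha, beta, gamma} := fun x hx => Submodule.subset_span hx
  exact Submodule.add_mem _ (Submodule.add_mem _
    (Submodule.smul_mem _ _ (hmem _ (by simp)))
    (Submodule.smul_mem _ _ (hmem _ (by simp))))
    (Submodule.smul_mem _ _ (hmem _ (by simp)))

lemma li : LinearIndependent Kq ![alpha, beta, gamma] := by
  rw [Fintype.linearIndependent_iff]
  intro g hg
  rw [Fin.sum_univ_three] at hg
  have h4 : g 0 * 1 + g 1 * 0 + g 2 * 0 = 0 := congrFun hg 4
  have h7 : g 0 * 0 + g 1 * 1 + g 2 * 0 = 0 := congrFun hg 7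
  have h8 : g 0 * 0 + g 1 * 0 + g 2 * 1 = 0 := congrFun hg 8
  intro i
  fin_cases i
  · show g 0 = 0; linear_combination h4
  · show g 1 = 0; linear_combination h7
  · show g 2 = 0; linear_combination h8

lemma range_eq : Set.range ![alpha, beta, gamma] = {alpha, beta, gamma} := by
  ext x
  constructor
  · rintro ⟨i, rfl⟩
    fin_cases i
    · exact Set.mem_insert _ _
    · exact Set.mem_insert_of_mem _ (Set.mem_insert _ _)
    · exact Set.mem_insert_of_mem _ (Set.mem_insert_of_mem _ rfl)
  · rintro (rfl | rfl | rfl)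
    exacts [⟨0, rfl⟩, ⟨1, rfl⟩, ⟨2, rfl⟩]


theorem verra_E_rank_six_kernel_three :
    (verraM q1 q2 2 2).rank = 6 ∧
    LinearMap.ker (verraM q1 q2 2 2).mulVecLin =
      Submodule.span Kq {alpha, beta, gamma} := by
  have hker : LinearMap.ker (verraM q1 q2 2 2).mulVecLin =
      Submodule.span Kq {alpha, beta, gamma} := by
    refine le_antisymm ker_le ?_
    rw [Submodule.span_le]
    rintro x (rfl | rfl | rfl)
    exacts [mulA, mulB, mulG]
  refine ⟨?_, hker⟩
  have hspan : Module.finrank Kq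
      (Submodule.span Kq ({alpha, beta, gamma} : Set (Fin 9 → Kq))) = 3 := by
    rw [← range_eq, finrank_span_eq_card li]
    simp
  have hrn := LinearMap.finrank_range_add_finrank_ker (verraM q1 q2 2 2).mulVecLin
  rw [hker, hspan, Module.finrank_pi] at hrn
  simp only [Fintype.card_fin] at hrn
  have : (verraM q1 q2 2 2).rank =
      Module.finrank Kq (LinearMap.range (verraM q1 q2 2 2).mulVecLin) := rfl
  omega
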